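/- Let (A, ρ) be a unital Banach algebra and δ an element of the bidual of ker ρ ⊆ A ⊗̂ A^{op}. Suppose c := sup_{‖a‖≤1} ‖a ·_ρ δ - δ ·_ρ a - a ⊗ 1 + 1 ⊗ a‖ is finite. Then for every R ∈ (ker ρ)**, ‖R ⋆_ρ δ - R‖ ≤ c‖R‖, where ⋆_ρ denotes the first Arens product on (A ⊗̂ A^{op})**. -/

import Mathlib

open NormedSpace Metric

noncomputable section

universe u v w

/-- The topological dual of a normed space, as `NormedSpace.Dual` was in the older Mathlib. -/
abbrev Dual (𝕜 : Type*) [NontriviallyNormedField 𝕜] (E : Type*) [SeminormedAddCommGroup E]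
    [NormedSpace 𝕜 E] : Type _ := E →L[𝕜] 𝕜

/-- The Banach-space transpose (adjoint) of a continuous linear map. -/
def dualTranspose {X : Type u} {Y : Type v} [NormedAddCommGroup X] [NormedSpace ℂ X]
    [NormedAddCommGroup Y] [NormedSpace ℂ Y] (f : X →L[ℂ] Y) :
    Dual ℂ Y →L[ℂ] Dual ℂ X :=
  (ContinuousLinearMap.compL ℂ X Y ℂ).flip f

/-- The bidual (double adjoint) map `f** : X** → Y**`. -/
def bidualMap {X : Type u} {Y : Type v} [NormedAddCommGroup X] [NormedSpace ℂ X]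
    [NormedAddCommGroup Y] [NormedSpace ℂ Y] (f : X →L[ℂ] Y) :
    Dual ℂ (Dual ℂ X) →L[ℂ] Dual ℂ (Dual ℂ Y) :=
  dualTranspose (dualTranspose f)

/-- `(T, p)` is (an isometric copy of) the projective tensor product `A ⊗̂ A`:
`p` is a contractive bilinear map with dense span satisfying the universal
property of the projective tensor norm. -/
structure IsProjTensorProduct (A : Type u) (T : Type v) [NormedAddCommGroup A]
    [NormedSpace ℂ A] [NormedAddCommGroup T] [NormedSpace ℂ T] [CompleteSpace T]
    (p : A →L[ℂ] A →L[ℂ] T) : Prop where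
  norm_tmul_le : ∀ a b : A, ‖p a b‖ ≤ ‖a‖ * ‖b‖
  dense_span : Dense (↑(Submodule.span ℂ (Set.range fun ab : A × A => p ab.1 ab.2)) : Set T)
  lift : ∀ {W : Type w} [NormedAddCommGroup W] [NormedSpace ℂ W] [CompleteSpace W]
      (f : A →L[ℂ] A →L[ℂ] W), ∃ g : T →L[ℂ] W, (∀ a b : A, g (p a b) = f a b) ∧ ‖g‖ ≤ ‖f‖

open ContinuousLinearMap

/-- Two continuous linear maps out of (a copy of) a projective tensor product agreeing on
elementary tensors are equal. -/
lemma IsProjTensorProduct.ext' {A : Type u} {T : Type v} [NormedAddCommGroup A]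
    [NormedSpace ℂ A] [NormedAddCommGroup T] [NormedSpace ℂ T] [CompleteSpace T]
    {p : A →L[ℂ] A →L[ℂ] T} (hp : IsProjTensorProduct A T p)
    {W : Type w} [NormedAddCommGroup W] [NormedSpace ℂ W]
    {F G : T →L[ℂ] W} (h : ∀ a b : A, F (p a b) = G (p a b)) : F = G := by
  refine ContinuousLinearMap.ext_on hp.dense_span ?_
  rintro _ ⟨ab, rfl⟩
  exact h ab.1 ab.2


/-- Lift of a bilinear functional through (a copy of) the projective tensor product,
routed through `ULift` to fix universes. -/
lemma IsProjTensorProduct.liftFun {A : Type u} {T : Type v} [NormedAddCommGroup A]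
    [NormedSpace ℂ A] [NormedAddCommGroup T] [NormedSpace ℂ T] [CompleteSpace T]
    {p : A →L[ℂ] A →L[ℂ] T} (hp : IsProjTensorProduct.{u, v, w} A T p)
    (B : A →L[ℂ] A →L[ℂ] ℂ) :
    ∃ ξ : T →L[ℂ] ℂ, (∀ a b : A, ξ (p a b) = B a b) ∧ ‖ξ‖ ≤ ‖B‖ := by
  let ι : ℂ ≃ₗᵢ[ℂ] ULift.{w} ℂ := (LinearIsometryEquiv.ulift ℂ ℂ).symm
  let B' : A →L[ℂ] A →L[ℂ] ULift.{w} ℂ :=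
    ((ContinuousLinearMap.compL ℂ A ℂ (ULift.{w} ℂ))
      ι.toLinearIsometry.toContinuousLinearMap).comp B
  have hB' : ‖B'‖ ≤ ‖B‖ := by
    refine ContinuousLinearMap.opNorm_le_bound _ (norm_nonneg B) fun a => ?_
    refine ContinuousLinearMap.opNorm_le_bound _ (by positivity) fun b => ?_
    show ‖ι (B a b)‖ ≤ ‖B‖ * ‖a‖ * ‖b‖
    rw [ι.norm_map]
    calc ‖B a b‖ ≤ ‖B a‖ * ‖b‖ := ContinuousLinearMap.le_opNorm _ _
      _ ≤ (‖B‖ * ‖a‖) * ‖b‖ :=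
          mul_le_mul_of_nonneg_right (ContinuousLinearMap.le_opNorm _ _) (norm_nonneg b)
      _ = ‖B‖ * ‖a‖ * ‖b‖ := by ring
  obtain ⟨g, hg, hgn⟩ := hp.lift B'
  refine ⟨(ι.symm.toLinearIsometry.toContinuousLinearMap).comp g, fun a b => ?_, ?_⟩
  · show ι.symm (g (p a b)) = B a b
    rw [hg]
    show ι.symm (ι (B a b)) = B a b
    simp
  · refine ContinuousLinearMap.opNorm_le_bound _ (norm_nonneg B) fun x => ?_
    calc ‖ι.symm (g x)‖ = ‖g x‖ := ι.symm.norm_map _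
      _ ≤ ‖g‖ * ‖x‖ := ContinuousLinearMap.le_opNorm _ _
      _ ≤ ‖B‖ * ‖x‖ :=
          mul_le_mul_of_nonneg_right (hgn.trans hB') (norm_nonneg x)

set_option maxHeartbeats 2000000 in
theorem stmt13 {A : Type u} [NormedAddCommGroup A] [NormedSpace ℂ A] [CompleteSpace A]
    {T : Type v} [NormedAddCommGroup T] [NormedSpace ℂ T] [CompleteSpace T]
    (p : A →L[ℂ] A →L[ℂ] T) (hp : IsProjTensorProduct A T p)
    (μ : A →L[ℂ] A →L[ℂ] A)
    (hμa : ∀ a b c : A, μ (μ a b) c = μ a (μ b c))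
    (hμn : ∀ a b : A, ‖μ a b‖ ≤ ‖a‖ * ‖b‖)
    (e : A) (he : ∀ a : A, μ e a = a ∧ μ a e = a)
    (ρh : T →L[ℂ] A) (hρh : ∀ a b : A, ρh (p a b) = μ a b)
    -- the multiplication of `A ⊗̂ Aᵒᵖ`
    (m : T →L[ℂ] T →L[ℂ] T)
    (hm : ∀ a b c d : A, m (p a b) (p c d) = p (μ a c) (μ d b))
    -- `star` is the first Arens product on `(A ⊗̂ Aᵒᵖ)**`
    (star : Dual ℂ (Dual ℂ T) →L[ℂ] Dual ℂ (Dual ℂ T) →L[ℂ] Dual ℂ (Dual ℂ T))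
    (hstar : ∀ (F G : Dual ℂ (Dual ℂ T)) (f g : Dual ℂ T),
      (∀ s : T, g s = G (dualTranspose (m s) f)) → star F G f = F g)
    -- the canonical bimodule actions of `A` on `A ⊗̂ A`
    (L R : A →L[ℂ] T →L[ℂ] T)
    (hL : ∀ a b c : A, L a (p b c) = p (μ a b) c)
    (hR : ∀ a b c : A, R a (p b c) = p b (μ c a))
    (δ : Dual ℂ (Dual ℂ T)) (hδ : bidualMap ρh δ = 0)
    (c : ℝ)
    (hc : ∀ a : A, ‖a‖ ≤ 1 →
      ‖bidualMap (L a) δ - bidualMap (R a) δ -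
        inclusionInDoubleDual ℂ T (p a e) + inclusionInDoubleDual ℂ T (p e a)‖ ≤ c) :
    ∀ R₀ : Dual ℂ (Dual ℂ T), bidualMap ρh R₀ = 0 → ‖star R₀ δ - R₀‖ ≤ c * ‖R₀‖ := by
  intro R₀ hR₀
  set J : T →L[ℂ] Dual ℂ (Dual ℂ T) := inclusionInDoubleDual ℂ T with hJdef
  -- `c` is nonnegative
  have hc0 : 0 ≤ c := (norm_nonneg _).trans (hc 0 (by simp))
  -- the "defect" map `Δ`, as a continuous linear map in `a`
  set DT1 : (T →L[ℂ] T) →L[ℂ] (Dual ℂ T →L[ℂ] Dual ℂ T) := (compL ℂ T T ℂ).flip with hDT1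
  set DT2 : (Dual ℂ T →L[ℂ] Dual ℂ T) →L[ℂ]
      (Dual ℂ (Dual ℂ T) →L[ℂ] Dual ℂ (Dual ℂ T)) :=
    (compL ℂ (Dual ℂ T) (Dual ℂ T) ℂ).flip with hDT2
  set BD : (T →L[ℂ] T) →L[ℂ] (Dual ℂ (Dual ℂ T) →L[ℂ] Dual ℂ (Dual ℂ T)) :=
    DT2.comp DT1 with hBD
  set Δ : A →L[ℂ] Dual ℂ (Dual ℂ T) :=
    ((BD.comp L).flip δ) - ((BD.comp R).flip δ) - J.comp (p.flip e) + J.comp (p e) with hΔdef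
  have hΔa : ∀ a : A,
      Δ a = bidualMap (L a) δ - bidualMap (R a) δ - J (p a e) + J (p e a) := fun a => rfl
  have hcΔ : ∀ a : A, ‖a‖ ≤ 1 → ‖Δ a‖ ≤ c := by
    intro a ha
    rw [hΔa]
    exact hc a ha
  have hΔnorm : ∀ a : A, ‖Δ a‖ ≤ c * ‖a‖ := by
    intro a
    rcases eq_or_ne a 0 with rfl | ha
    · simp
    · have hna : (0:ℝ) < ‖a‖ := norm_pos_iff.mpr ha
      have hz : ‖(((‖a‖ : ℝ) : ℂ))⁻¹‖ = ‖a‖⁻¹ := by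
        simp
      have h1 : ‖(((‖a‖ : ℝ) : ℂ))⁻¹ • a‖ = 1 := by
        rw [norm_smul, hz, inv_mul_cancel₀ hna.ne']
      have h2 := hcΔ _ (le_of_eq h1)
      rw [map_smul, norm_smul, hz] at h2
      calc ‖Δ a‖ = (‖a‖⁻¹ * ‖Δ a‖) * ‖a‖ := by field_simp
        _ ≤ c * ‖a‖ := mul_le_mul_of_nonneg_right h2 hna.le
  -- algebraic identities
  have hm' : ∀ a b : A, m (p a b) = (R b).comp (L a) := fun a b => hp.ext' fun x y => by
    rw [hm]
    show p (μ a x) (μ y b) = R b (L a (p x y))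
    rw [hL, hR]
  have hRR : ∀ a b : A, (R b).comp (R a) = R (μ a b) := fun a b => hp.ext' fun x y => by
    show R b (R a (p x y)) = R (μ a b) (p x y)
    rw [hR, hR, hR, hμa]
  -- main estimate
  refine opNorm_le_bound _ (mul_nonneg hc0 (norm_nonneg R₀)) fun f => ?_
  set Cf : (T →L[ℂ] T) →L[ℂ] Dual ℂ T := compL ℂ T T ℂ f with hCf
  have hfR : ∀ b : A, ‖f.comp (R b)‖ ≤ ‖f‖ * ‖b‖ := by
    intro b
    obtain ⟨ξ₀, h1, h2⟩ :=
      hp.liftFun (((compL ℂ A T ℂ) f).comp (((compL ℂ A A T).flip (μ.flip b)).comp p))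
    have he0 : ξ₀ = f.comp (R b) := hp.ext' fun x y => by
      rw [h1]
      show f (p x (μ y b)) = f (R b (p x y))
      rw [hR]
    have hn : ‖((compL ℂ A T ℂ) f).comp (((compL ℂ A A T).flip (μ.flip b)).comp p)‖
        ≤ ‖f‖ * ‖b‖ := by
      refine opNorm_le_bound _ (by positivity) fun x => ?_
      refine opNorm_le_bound _ (by positivity) fun y => ?_
      show ‖f (p x (μ y b))‖ ≤ ‖f‖ * ‖b‖ * ‖x‖ * ‖y‖
      calc ‖f (p x (μ y b))‖ ≤ ‖f‖ * ‖p x (μ y b)‖ := le_opNorm _ _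
        _ ≤ ‖f‖ * (‖x‖ * ‖μ y b‖) := by gcongr; exact hp.norm_tmul_le _ _
        _ ≤ ‖f‖ * (‖x‖ * (‖y‖ * ‖b‖)) := by gcongr; exact hμn y b
        _ = ‖f‖ * ‖b‖ * ‖x‖ * ‖y‖ := by ring
    rw [← he0]
    exact h2.trans hn
  set g : Dual ℂ T := δ.comp (Cf.comp m) with hgdef
  have hg : star R₀ δ f = R₀ g := hstar R₀ δ f g fun s => rfl
  set W : A →L[ℂ] Dual ℂ T := Cf.comp R with hW
  set B : A →L[ℂ] A →L[ℂ] ℂ := ((compL ℂ A (Dual ℂ T) ℂ).flip W).comp Δ with hBdef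
  have hBnorm : ‖B‖ ≤ c * ‖f‖ := by
    refine opNorm_le_bound _ (mul_nonneg hc0 (norm_nonneg f)) fun a => ?_
    refine opNorm_le_bound _ (by positivity) fun b => ?_
    have h1 : ‖W b‖ ≤ ‖f‖ * ‖b‖ := hfR b
    calc ‖B a b‖ = ‖Δ a (W b)‖ := rfl
      _ ≤ ‖Δ a‖ * ‖W b‖ := le_opNorm _ _
      _ ≤ (c * ‖a‖) * (‖f‖ * ‖b‖) :=
          mul_le_mul (hΔnorm a) h1 (norm_nonneg _) (by positivity)
      _ = c * ‖f‖ * ‖a‖ * ‖b‖ := by ring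
  obtain ⟨ξ, hξ, hξn⟩ := hp.liftFun B
  set φ : A →L[ℂ] ℂ := δ.comp W - f.comp (p e) with hφdef
  have hbid : ∀ (a : A) (h : Dual ℂ T),
      δ (h.comp (L a)) = Δ a h + δ (h.comp (R a)) + h (p a e) - h (p e a) := by
    intro a h
    have h0 := congrArg (fun F : Dual ℂ (Dual ℂ T) => F h) (hΔa a)
    simp only [ContinuousLinearMap.sub_apply, ContinuousLinearMap.add_apply] at h0
    have e1 : bidualMap (L a) δ h = δ (h.comp (L a)) := rfl
    have e2 : bidualMap (R a) δ h = δ (h.comp (R a)) := rfl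
    have e3 : J (p a e) h = h (p a e) := rfl
    have e4 : J (p e a) h = h (p e a) := rfl
    rw [e1, e2, e3, e4] at h0
    linear_combination -h0
  have key : g = f + φ.comp ρh + ξ := by
    refine hp.ext' fun a b => ?_
    have lhs1 : g (p a b) = δ (f.comp (m (p a b))) := rfl
    rw [lhs1, hm' a b]
    have hassoc : f.comp ((R b).comp (L a)) = (f.comp (R b)).comp (L a) := rfl
    rw [hassoc, hbid a (f.comp (R b))]
    have c1 : Δ a (f.comp (R b)) = ξ (p a b) := (hξ a b).symm
    have c2 : (f.comp (R b)).comp (R a) = f.comp (R (μ a b)) := by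
      rw [← hRR a b]
      rfl
    have c3 : (f.comp (R b)) (p a e) = f (p a b) := by
      show f (R b (p a e)) = f (p a b)
      rw [hR, (he b).1]
    have c4 : (f.comp (R b)) (p e a) = f (p e (μ a b)) := by
      show f (R b (p e a)) = f (p e (μ a b))
      rw [hR]
    rw [c1, c2, c3, c4]
    have rhs : (f + φ.comp ρh + ξ) (p a b) = f (p a b) + φ (μ a b) + ξ (p a b) := by
      simp only [ContinuousLinearMap.add_apply, ContinuousLinearMap.comp_apply, hρh]
    rw [rhs]
    have hφv : φ (μ a b) = δ (f.comp (R (μ a b))) - f (p e (μ a b)) := rfl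
    rw [hφv]
    ring
  have hz : R₀ (φ.comp ρh) = 0 := by
    have h1 : R₀ (φ.comp ρh) = bidualMap ρh R₀ φ := rfl
    rw [h1, hR₀]
    rfl
  have hval : star R₀ δ f - R₀ f = R₀ ξ := by
    rw [hg, key]
    simp only [map_add, hz]
    ring
  calc ‖(star R₀ δ - R₀) f‖ = ‖R₀ ξ‖ := by rw [ContinuousLinearMap.sub_apply, hval]
    _ ≤ ‖R₀‖ * ‖ξ‖ := le_opNorm _ _
    _ ≤ ‖R₀‖ * (c * ‖f‖) :=
        mul_le_mul_of_nonneg_left (hξn.trans hBnorm) (norm_nonneg _)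
    _ = c * ‖R₀‖ * ‖f‖ := by ring
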